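/- arXiv:math/0512404 — 2 statements merged into one kernel-verified Lean document; each statement's English description precedes it below -/
import Mathlib

section
/- Assume Condition (TU): for every strictly increasing sequence (n_i) of positive integers and all irrational ω, ω' ∈ (0,1) whose squares ω² and ω'² differ by a dyadic rational, limsup_{i→∞} f_{n_i}(ω) = limsup_{i→∞} f_{n_i}(ω'). Then for every natural number s that is not a perfect square, lim_{n→∞} f_n(√s − ⌊√s⌋) = 1/2, i.e. √s is simply normal to base 2. -/
open Filter Finset Set

/-- The `n`-th binary digit of `α` (for `n ≥ 1`): `⌊2^n α⌋ − 2⌊2^{n−1} α⌋`. -/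
noncomputable def binDigit (α : ℝ) (n : ℕ) : ℤ :=
  ⌊(2:ℝ) ^ n * α⌋ - 2 * ⌊(2:ℝ) ^ (n - 1) * α⌋

/-- Relative frequency of the digit 1 among the first `n` binary digits of `α`. -/
noncomputable def digitFreq (α : ℝ) (n : ℕ) : ℝ :=
  (∑ i ∈ Finset.Icc 1 n, (binDigit α i : ℝ)) / n


lemma binDigit_nonneg (α : ℝ) {n : ℕ} (hn : 1 ≤ n) : 0 ≤ binDigit α n := by
  obtain ⟨k, rfl⟩ : ∃ k, n = k + 1 := ⟨n - 1, (Nat.succ_pred_eq_of_pos hn).symm⟩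
  have h : (2:ℝ) ^ (k+1) * α = 2 * ((2:ℝ) ^ k * α) := by ring
  unfold binDigit
  simp only [Nat.add_sub_cancel, h]
  have : 2 * ⌊(2:ℝ) ^ k * α⌋ ≤ ⌊2 * ((2:ℝ) ^ k * α)⌋ := by
    rw [Int.le_floor]
    push_cast
    nlinarith [Int.floor_le ((2:ℝ) ^ k * α)]
  omega

lemma binDigit_le_one (α : ℝ) {n : ℕ} (hn : 1 ≤ n) : binDigit α n ≤ 1 := by
  obtain ⟨k, rfl⟩ : ∃ k, n = k + 1 := ⟨n - 1, (Nat.succ_pred_eq_of_pos hn).symm⟩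
  have h : (2:ℝ) ^ (k+1) * α = 2 * ((2:ℝ) ^ k * α) := by ring
  unfold binDigit
  simp only [Nat.add_sub_cancel, h]
  have : ⌊2 * ((2:ℝ) ^ k * α)⌋ < 2 * ⌊(2:ℝ) ^ k * α⌋ + 2 := by
    rw [Int.floor_lt]
    push_cast
    nlinarith [Int.lt_floor_add_one ((2:ℝ) ^ k * α)]
  omega

lemma binDigit_eq_of_dyadic {u v : ℝ} (m : ℤ) (t : ℕ) (h : u = v + (m:ℝ) / 2 ^ t)
    {n : ℕ} (hn : t < n) : binDigit u n = binDigit v n := by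
  have key : ∀ j : ℕ, t ≤ j → ⌊(2:ℝ) ^ j * u⌋ = ⌊(2:ℝ) ^ j * v⌋ + m * 2 ^ (j - t) := by
    intro j hj
    have h2 : (2:ℝ) ^ j * u = (2:ℝ) ^ j * v + ((m * 2 ^ (j - t) : ℤ) : ℝ) := by
      rw [h]
      have : (2:ℝ) ^ j = 2 ^ (j - t) * 2 ^ t := by
        rw [← pow_add, Nat.sub_add_cancel hj]
      push_cast
      rw [this]
      field_simp
    rw [h2, Int.floor_add_intCast]
  obtain ⟨k, rfl⟩ : ∃ k, n = k + 1 := ⟨n - 1, (Nat.succ_pred_eq_of_pos (by omega)).symm⟩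
  unfold binDigit
  simp only [Nat.add_sub_cancel]
  rw [key (k+1) (by omega), key k (by omega)]
  have : (k + 1) - t = (k - t) + 1 := by omega
  rw [this, pow_succ]
  ring

lemma binDigit_half (α : ℝ) (n : ℕ) (hn : 1 ≤ n) : binDigit (α / 2) (n + 1) = binDigit α n := by
  obtain ⟨k, rfl⟩ : ∃ k, n = k + 1 := ⟨n - 1, (Nat.succ_pred_eq_of_pos hn).symm⟩
  unfold binDigit
  simp only [Nat.add_sub_cancel]
  have h1 : (2:ℝ) ^ (k + 1 + 1) * (α / 2) = (2:ℝ) ^ (k+1) * α := by ring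
  have h2 : (2:ℝ) ^ (k + 1) * (α / 2) = (2:ℝ) ^ k * α := by ring
  rw [h1, h2]

lemma binDigit_one_sub {α : ℝ} (h : Irrational α) {n : ℕ} (hn : 1 ≤ n) :
    binDigit (1 - α) n = 1 - binDigit α n := by
  have key : ∀ j : ℕ, ⌊(2:ℝ) ^ j * (1 - α)⌋ = 2 ^ j - ⌊(2:ℝ) ^ j * α⌋ - 1 := by
    intro j
    have hirr : Irrational ((2:ℝ) ^ j * α) := by
      have := h.intCast_mul (m := (2:ℤ)^j) (by positivity)
      simpa [Int.cast_pow] using this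
    have hne : (2:ℝ) ^ j * α ≠ (⌊(2:ℝ) ^ j * α⌋ : ℝ) := fun hc => hirr ⟨⌊(2:ℝ) ^ j * α⌋, hc.symm⟩
    have h2 : (2:ℝ) ^ j * (1 - α) = ((2^j : ℤ) : ℝ) + (- ((2:ℝ) ^ j * α)) := by push_cast; ring
    rw [h2, Int.floor_intCast_add]
    have : ⌊-((2:ℝ) ^ j * α)⌋ = -⌊(2:ℝ) ^ j * α⌋ - 1 := by
      rw [Int.floor_eq_iff] <;> push_cast
      constructor
      · nlinarith [Int.lt_floor_add_one ((2:ℝ) ^ j * α)]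
      · have := Int.floor_le ((2:ℝ) ^ j * α)
        rcases lt_or_eq_of_le this with h' | h'
        · linarith
        · exact absurd h'.symm hne
    omega
  obtain ⟨k, rfl⟩ : ∃ k, n = k + 1 := ⟨n - 1, (Nat.succ_pred_eq_of_pos hn).symm⟩
  unfold binDigit
  simp only [Nat.add_sub_cancel]
  rw [key (k+1), key k]
  have : (2:ℤ) ^ (k+1) = 2 * 2 ^ k := by ring
  omega

lemma digitFreq_mem (α : ℝ) (n : ℕ) : digitFreq α n ∈ Set.Icc (0:ℝ) 1 := by
  rcases Nat.eq_zero_or_pos n with rfl | hn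
  · simp [digitFreq]
  constructor
  · apply div_nonneg _ (by positivity)
    apply Finset.sum_nonneg
    intro i hi
    have : 1 ≤ i := (Finset.mem_Icc.1 hi).1
    exact_mod_cast binDigit_nonneg α this
  · rw [digitFreq, div_le_one (by exact_mod_cast hn : (0:ℝ) < n)]
    calc ∑ i ∈ Finset.Icc 1 n, ((binDigit α i : ℝ)) ≤ ∑ i ∈ Finset.Icc 1 n, 1 := by
          apply Finset.sum_le_sum
          intro i hi
          exact_mod_cast binDigit_le_one α (Finset.mem_Icc.1 hi).1
      _ = n := by simp

lemma sum_binDigit_half (α : ℝ) (n : ℕ) :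
    ∑ i ∈ Finset.Icc 1 (n+1), ((binDigit (α/2) i : ℝ)) =
      (binDigit (α/2) 1 : ℝ) + ∑ i ∈ Finset.Icc 1 n, ((binDigit α i : ℝ)) := by
  induction n with
  | zero => simp
  | succ k ih =>
    rw [Finset.sum_Icc_succ_top (by omega : 1 ≤ k + 1 + 1), ih,
      Finset.sum_Icc_succ_top (by omega : 1 ≤ k + 1), binDigit_half α (k+1) (by omega)]
    ring

lemma freq_half (α : ℝ) (k : ℕ) :
    |digitFreq (α/2) (k+1) - digitFreq α (k+1)| ≤ 2 / (k+1) := by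
  have hs2 : ∑ i ∈ Finset.Icc 1 (k+1), ((binDigit α i : ℝ)) =
      (∑ i ∈ Finset.Icc 1 k, ((binDigit α i : ℝ))) + (binDigit α (k+1) : ℝ) := by
    rw [Finset.sum_Icc_succ_top (by omega : 1 ≤ k + 1)]
  have heq : digitFreq (α/2) (k+1) - digitFreq α (k+1) =
      ((binDigit (α/2) 1 : ℝ) - (binDigit α (k+1) : ℝ)) / ((k:ℝ)+1) := by
    rw [digitFreq, digitFreq, sum_binDigit_half, hs2]
    push_cast
    ring
  rw [heq, abs_div, abs_of_pos (show (0:ℝ) < (k:ℝ)+1 by positivity)]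
  have h1 := binDigit_nonneg (α/2) (le_refl 1)
  have h2 := binDigit_le_one (α/2) (le_refl 1)
  have h3 := binDigit_nonneg α (by omega : 1 ≤ k+1)
  have h4 := binDigit_le_one α (by omega : 1 ≤ k+1)
  have hnum : |(binDigit (α/2) 1 : ℝ) - (binDigit α (k+1) : ℝ)| ≤ 2 := by
    have c1 : (0:ℝ) ≤ (binDigit (α/2) 1 : ℝ) := by exact_mod_cast h1
    have c2 : ((binDigit (α/2) 1 : ℤ) : ℝ) ≤ 1 := by exact_mod_cast h2
    have c3 : (0:ℝ) ≤ (binDigit α (k+1) : ℝ) := by exact_mod_cast h3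
    have c4 : ((binDigit α (k+1) : ℤ) : ℝ) ≤ 1 := by exact_mod_cast h4
    rw [abs_le]
    constructor <;> linarith
  gcongr

lemma freq_div_pow (α : ℝ) (c : ℕ) : ∀ n : ℕ, 1 ≤ n →
    |digitFreq (α / 2^c) n - digitFreq α n| ≤ (2*c) / n := by
  induction c with
  | zero => intro n hn; simp
  | succ c ih =>
    intro n hn
    obtain ⟨k, rfl⟩ : ∃ k, n = k + 1 := ⟨n - 1, (Nat.succ_pred_eq_of_pos hn).symm⟩
    have hsplit : α / 2 ^ (c+1) = (α / 2^c) / 2 := by rw [pow_succ]; ring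
    have h1 := freq_half (α / 2^c) k
    have h2 := ih (k+1) (by omega)
    rw [hsplit]
    have : (0:ℝ) < (k:ℝ)+1 := by positivity
    calc |digitFreq (α / 2^c / 2) (k+1) - digitFreq α (k+1)|
        ≤ |digitFreq (α / 2^c / 2) (k+1) - digitFreq (α / 2^c) (k+1)|
          + |digitFreq (α / 2^c) (k+1) - digitFreq α (k+1)| := abs_sub_le _ _ _
      _ ≤ 2 / ((k:ℝ)+1) + (2*c) / ((k:ℝ)+1) := by
          push_cast at h1 h2 ⊢; exact add_le_add h1 h2
      _ = (2*(c+1)) / ((k:ℝ)+1) := by field_simp; ring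
      _ = (2*((c:ℕ)+1:ℕ)) / (((k+1:ℕ) : ℝ)) := by push_cast; ring

lemma freq_dyadic {u v : ℝ} (m : ℤ) (t : ℕ) (h : u = v + (m:ℝ) / 2 ^ t) :
    ∀ n : ℕ, 1 ≤ n → |digitFreq u n - digitFreq v n| ≤ t / n := by
  intro n hn
  have hnR : (0:ℝ) < n := by exact_mod_cast hn
  have hsum : (∑ i ∈ Finset.Icc 1 n, ((binDigit u i : ℝ))) -
      (∑ i ∈ Finset.Icc 1 n, ((binDigit v i : ℝ))) =
      ∑ i ∈ Finset.Icc 1 n, (((binDigit u i : ℝ)) - ((binDigit v i : ℝ))) := by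
    rw [Finset.sum_sub_distrib]
  have hsub : ∑ i ∈ Finset.Icc 1 n, (((binDigit u i : ℝ)) - ((binDigit v i : ℝ))) =
      ∑ i ∈ Finset.Icc 1 (min n t), (((binDigit u i : ℝ)) - ((binDigit v i : ℝ))) := by
    symm
    apply Finset.sum_subset
    · intro i hi
      rw [Finset.mem_Icc] at *
      omega
    · intro i hi hni
      rw [Finset.mem_Icc] at hi
      rw [Finset.mem_Icc] at hni
      have hit : t < i := by omega
      rw [binDigit_eq_of_dyadic m t h hit]
      ring
  have hboundsum : |∑ i ∈ Finset.Icc 1 (min n t),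
      (((binDigit u i : ℝ)) - ((binDigit v i : ℝ)))| ≤ t := by
    calc |∑ i ∈ Finset.Icc 1 (min n t), (((binDigit u i : ℝ)) - ((binDigit v i : ℝ)))|
        ≤ ∑ i ∈ Finset.Icc 1 (min n t), |((binDigit u i : ℝ)) - ((binDigit v i : ℝ))| :=
          Finset.abs_sum_le_sum_abs _ _
      _ ≤ ∑ _i ∈ Finset.Icc 1 (min n t), (1:ℝ) := by
          apply Finset.sum_le_sum
          intro i hi
          rw [Finset.mem_Icc] at hi
          have h1 := binDigit_nonneg u hi.1
          have h2 := binDigit_le_one u hi.1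
          have h3 := binDigit_nonneg v hi.1
          have h4 := binDigit_le_one v hi.1
          have c1 : (0:ℝ) ≤ (binDigit u i : ℝ) := by exact_mod_cast h1
          have c2 : ((binDigit u i : ℤ) : ℝ) ≤ 1 := by exact_mod_cast h2
          have c3 : (0:ℝ) ≤ (binDigit v i : ℝ) := by exact_mod_cast h3
          have c4 : ((binDigit v i : ℤ) : ℝ) ≤ 1 := by exact_mod_cast h4
          rw [abs_le]
          constructor <;> linarith
      _ = (min n t : ℕ) := by rw [Finset.sum_const]; simp
      _ ≤ t := by exact_mod_cast Nat.min_le_right n t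
  have heq : digitFreq u n - digitFreq v n =
      (∑ i ∈ Finset.Icc 1 (min n t), (((binDigit u i : ℝ)) - ((binDigit v i : ℝ)))) / n := by
    rw [digitFreq, digitFreq, div_sub_div_same, hsum, hsub]
  rw [heq, abs_div, abs_of_pos hnR]
  gcongr
lemma freq_one_sub {α : ℝ} (h : Irrational α) {n : ℕ} (hn : 1 ≤ n) :
    digitFreq (1 - α) n = 1 - digitFreq α n := by
  have hnR : (0:ℝ) < n := by exact_mod_cast hn
  have hsum : ∑ i ∈ Finset.Icc 1 n, ((binDigit (1 - α) i : ℝ)) =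
      ∑ i ∈ Finset.Icc 1 n, (1 - ((binDigit α i : ℝ))) := by
    apply Finset.sum_congr rfl
    intro i hi
    rw [Finset.mem_Icc] at hi
    rw [binDigit_one_sub h hi.1]
    push_cast
    ring
  rw [digitFreq, digitFreq, hsum, Finset.sum_sub_distrib, Finset.sum_const]
  simp only [Nat.card_Icc, Nat.add_sub_cancel, nsmul_eq_mul, mul_one]
  field_simp

lemma freq_perturb (α : ℝ) (c t : ℕ) (m : ℤ) (u : ℝ) (hu : u = α / 2^c + (m:ℝ) / 2 ^ t) :
    Filter.Tendsto (fun n => digitFreq u n - digitFreq α n) Filter.atTop (nhds 0) := by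
  refine squeeze_zero_norm' (a := fun n : ℕ => ((t:ℝ) + 2*c) / n) ?_ ?_
  · filter_upwards [Filter.eventually_ge_atTop 1] with n hn
    have h1 := freq_dyadic m t hu n hn
    have h2 := freq_div_pow α c n hn
    have hnR : (0:ℝ) < n := by exact_mod_cast hn
    calc ‖digitFreq u n - digitFreq α n‖
        ≤ |digitFreq u n - digitFreq (α / 2^c) n| + |digitFreq (α / 2^c) n - digitFreq α n| := by
          rw [Real.norm_eq_abs]
          exact abs_sub_le _ _ _
      _ ≤ (t:ℝ) / n + (2*c) / n := by push_cast at h1 h2 ⊢; exact add_le_add h1 h2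
      _ = ((t:ℝ) + 2*c) / n := by field_simp
  · exact tendsto_const_div_atTop_nhds_zero_nat _

lemma exists_dyadic_btwn {u v : ℝ} (h : u < v) :
    ∃ m : ℤ, ∃ t : ℕ, u < (m:ℝ)/2^t ∧ (m:ℝ)/2^t < v := by
  obtain ⟨t, ht⟩ : ∃ t : ℕ, (1/2:ℝ)^t < v - u :=
    exists_pow_lt_of_lt_one (by linarith) (by norm_num)
  have h2t : (0:ℝ) < 2^t := by positivity
  have hpow : (1/2:ℝ)^t * 2^t = 1 := by
    rw [div_pow, one_pow]
    field_simp
  refine ⟨⌊u * 2^t⌋ + 1, t, ?_, ?_⟩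
  · rw [lt_div_iff₀ h2t]
    push_cast
    exact Int.lt_floor_add_one (u * 2^t)
  · rw [div_lt_iff₀ h2t]
    have hfl : (⌊u * 2^t⌋ : ℝ) ≤ u * 2^t := Int.floor_le _
    push_cast
    nlinarith [mul_lt_mul_of_pos_right ht h2t]

/-- Condition (TU) implies simple normality of `√s` to base 2. -/
theorem conditionTU_implies_simply_normal
    (hTU : ∀ ns : ℕ → ℕ, StrictMono ns → (∀ i, 0 < ns i) →
      ∀ ω ω' : ℝ, ω ∈ Set.Ioo (0:ℝ) 1 → ω' ∈ Set.Ioo (0:ℝ) 1 →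
      Irrational ω → Irrational ω' →
      (∃ m : ℤ, ∃ t : ℕ, ω ^ 2 - ω' ^ 2 = (m : ℝ) / 2 ^ t) →
      Filter.limsup (fun i => digitFreq ω (ns i)) Filter.atTop =
        Filter.limsup (fun i => digitFreq ω' (ns i)) Filter.atTop) :
    ∀ s : ℕ, ¬ IsSquare s →
      Filter.Tendsto (fun n => digitFreq (Int.fract (Real.sqrt s)) n)
        Filter.atTop (nhds (1/2)) := by
  intro s hs
  have hs2 : 2 ≤ s := by
    by_contra h
    interval_cases s
    · exact hs ⟨0, rfl⟩
    · exact hs ⟨1, rfl⟩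
  set S := Real.sqrt s with hSdef
  have hsR : (1:ℝ) < (s:ℝ) := by exact_mod_cast hs2
  have hS0 : 0 < S := Real.sqrt_pos.2 (by linarith)
  have hSirr : Irrational S := irrational_sqrt_natCast_iff.2 hs
  have hS2 : S^2 = (s:ℝ) := Real.sq_sqrt (by positivity)
  set A : ℝ := (2:ℝ)^s with hAdef
  set B : ℝ := (2:ℝ)^(2*s+2) with hBdef
  have hA0 : (0:ℝ) < A := by positivity
  have hB0 : (0:ℝ) < B := by positivity
  have hA4 : (4:ℝ) ≤ A := by
    rw [hAdef]
    calc (4:ℝ) = 2^2 := by norm_num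
      _ ≤ 2^s := by
        apply pow_le_pow_right₀ (by norm_num) hs2
  have hS1 : 1 < S := by
    rw [show (1:ℝ) = Real.sqrt 1 from Real.sqrt_one.symm]
    exact Real.sqrt_lt_sqrt (by norm_num) hsR
  have hSA : S < A := by
    rw [hSdef, hAdef]
    rw [show Real.sqrt s = Real.sqrt s from rfl]
    have : (s:ℝ) < ((2:ℝ)^s)^2 := by
      have h1 : (s:ℕ) < 2^s := Nat.lt_two_pow_self
      have h2 : (s:ℝ) < (2:ℝ)^s := by exact_mod_cast h1
      nlinarith [show (0:ℝ) < 2^s by positivity]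
    nlinarith [Real.sq_sqrt (show (0:ℝ) ≤ s by positivity), Real.sqrt_nonneg (s:ℝ),
      show (0:ℝ) < (2:ℝ)^s by positivity]
  have hBA : B = 4 * A^2 := by
    rw [hBdef, hAdef, ← pow_mul, pow_add]
    ring
  have hkey : S*A/B^2 + A/B < S/A := by
    rw [hBA]
    rw [div_add_div _ _ (by positivity) (by positivity), div_lt_div_iff₀ (by positivity) (by positivity)]
    have hA1 : (1:ℝ) ≤ A := by linarith
    have h6 : (0:ℝ) < A^6 := by positivity
    have e1 : A^4 ≤ A^6 := pow_le_pow_right₀ hA1 (by norm_num)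
    nlinarith [mul_le_mul_of_nonneg_left e1 (le_of_lt hS0), mul_lt_mul_of_pos_right hS1 h6,
      mul_pos hS0 h6]
  obtain ⟨m, t, hp1, hp2⟩ := exists_dyadic_btwn
    (show S*A/B^2 < S*A/B^2 + A/B by
      have : (0:ℝ) < A/B := by positivity
      linarith)
  set p : ℝ := (m:ℝ)/2^t with hpdef
  have hp0 : 0 < p := lt_trans (by positivity) hp1
  have hpS : p < S/A := lt_trans hp2 hkey
  set x : ℝ := S/A - p with hxdef
  set y : ℝ := S/B - (p*(B/A) - 1) with hydef
  have hx0 : 0 < x := by rw [hxdef]; linarith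
  have hx1 : x < 1 := by
    rw [hxdef]
    have : S/A < 1 := (div_lt_one hA0).2 hSA
    linarith
  have hy0 : 0 < y := by
    rw [hydef]
    have h2 : p * (B/A) < (S*A/B^2 + A/B) * (B/A) :=
      mul_lt_mul_of_pos_right hp2 (by positivity)
    have h3 : (S*A/B^2 + A/B) * (B/A) = S/B + 1 := by field_simp
    rw [h3] at h2
    linarith
  have hy1 : y < 1 := by
    rw [hydef]
    have h2 : S*A/B^2 * (B/A) < p * (B/A) :=
      mul_lt_mul_of_pos_right hp1 (by positivity)
    have h3 : S*A/B^2 * (B/A) = S/B := by field_simp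
    rw [h3] at h2
    linarith
  -- irrationality
  have hSAirr : Irrational (S/A) := by
    have := hSirr.div_natCast (m := 2^s) (by positivity)
    rwa [show ((2^s : ℕ) : ℝ) = A by rw [hAdef]; push_cast; ring] at this
  have hSBirr : Irrational (S/B) := by
    have := hSirr.div_natCast (m := 2^(2*s+2)) (by positivity)
    rwa [show ((2^(2*s+2) : ℕ) : ℝ) = B by rw [hBdef]; push_cast; ring] at this
  have hxirr : Irrational x := by
    have h1 := hSAirr.sub_ratCast ((m : ℚ)/2^t)
    rwa [show ((((m:ℚ)/2^t) : ℚ) : ℝ) = p by rw [hpdef]; push_cast; ring] at h1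
  have hBdivA : B/A = (2:ℝ)^(s+2) := by
    rw [hBdef, hAdef]
    rw [show 2*s+2 = s + (s+2) by omega, pow_add]
    field_simp
  have hyirr : Irrational y := by
    have h1 := hSBirr.sub_ratCast ((m : ℚ)/2^t * 2^(s+2) - 1)
    have heq : S/B - ((((m:ℚ)/2^t * 2^(s+2) - 1) : ℚ) : ℝ) = y := by
      rw [hydef, hpdef, hBdivA]
      push_cast
      ring
    rwa [heq] at h1
  have h1yirr : Irrational (1 - y) := by
    have := hyirr.ratCast_sub (q := 1)
    simpa using this
  -- squares differ by a dyadic rational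
  have h1y : 1 - y = p*(B/A) - S/B := by rw [hydef]; ring
  have hexp : x^2 - (1-y)^2 = (s:ℝ)/A^2 - (s:ℝ)/B^2 + p^2 - p^2*(B^2/A^2) := by
    rw [h1y, hxdef]
    have hA' : A ≠ 0 := ne_of_gt hA0
    have hB' : B ≠ 0 := ne_of_gt hB0
    field_simp
    linear_combination (16*2^(s*4) - 2^(s*2)) * hS2
  set t' : ℕ := 2*t + 4*s + 4 with ht'def
  set m' : ℤ := (s:ℤ)*2^(2*t+2*s+4) - (s:ℤ)*2^(2*t) + m^2*2^(4*s+4) - m^2*2^(6*s+8) with hm'def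
  have hsq : x^2 - (1-y)^2 = (m' : ℝ)/2^t' := by
    rw [hexp, hpdef, hAdef, hBdef, hm'def, ht'def]
    push_cast
    field_simp
    ring
  -- digit-frequency relations
  set θ : ℝ := Int.fract S with hθdef
  set k : ℤ := ⌊S⌋ with hkdef
  have hθeq : θ = S - k := by rw [hθdef, Int.fract]
  have hθirr : Irrational θ := by rw [hθeq]; exact hSirr.sub_intCast k
  have hθx : x = θ/2^s + ((k*2^t - m*2^s : ℤ):ℝ)/2^(s+t) := by
    rw [hxdef, hθeq, hpdef, hAdef]
    push_cast
    rw [pow_add]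
    field_simp
    ring
  have hθy : y = θ/2^(2*s+2) + ((k*2^t - m*2^(3*s+4) + 2^(t+2*s+2) : ℤ):ℝ)/2^(2*s+2+t) := by
    rw [hydef, hθeq, hpdef, hBdivA, hBdef]
    push_cast
    rw [pow_add, pow_add, pow_add]
    field_simp
    ring
  have hfx := freq_perturb θ s (s+t) (k*2^t - m*2^s) x hθx
  have hfy := freq_perturb θ (2*s+2) (2*s+2+t) (k*2^t - m*2^(3*s+4) + 2^(t+2*s+2)) y hθy
  -- main convergence argument
  refine Filter.tendsto_of_subseq_tendsto ?_
  intro ns hns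
  obtain ⟨c, _hcmem, φ, hφ, hcv⟩ := tendsto_subseq_of_bounded (Metric.isBounded_Icc (0:ℝ) 1)
    (fun i => digitFreq_mem θ (ns i))
  obtain ⟨ψ, hψ, hwψ⟩ := Filter.strictMono_subseq_of_tendsto_atTop
    (u := ns ∘ φ) (hns.comp hφ.tendsto_atTop)
  have hsucc : StrictMono (fun i : ℕ => i + 1) := fun i j h => Nat.succ_lt_succ h
  set NS : ℕ → ℕ := fun i => (ns ∘ φ) (ψ (i+1)) with hNSdef
  have hNSmono : StrictMono NS := fun i j hij => hwψ (hsucc hij)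
  have hNSpos : ∀ i, 0 < NS i := by
    intro i
    have h1 : i + 1 ≤ ((ns ∘ φ) ∘ ψ) (i+1) := hwψ.le_apply
    exact Nat.lt_of_lt_of_le (Nat.succ_pos i) h1
  have hNSat : Filter.Tendsto NS Filter.atTop Filter.atTop := hNSmono.tendsto_atTop
  have hθNS : Filter.Tendsto (fun i => digitFreq θ (NS i)) Filter.atTop (nhds c) := by
    have heq : (fun i => digitFreq θ (NS i)) =
        ((fun i => digitFreq θ (ns i)) ∘ φ) ∘ (fun i => ψ (i+1)) := rfl
    rw [heq]
    exact hcv.comp ((hψ.comp hsucc).tendsto_atTop)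
  have hxNS : Filter.Tendsto (fun i => digitFreq x (NS i)) Filter.atTop (nhds c) := by
    have hd := hfx.comp hNSat
    have heq : (fun i => digitFreq x (NS i)) =
        fun i => digitFreq θ (NS i) + (fun n => digitFreq x n - digitFreq θ n) (NS i) := by
      funext i; simp
    rw [heq]
    simpa using hθNS.add hd
  have hyNS : Filter.Tendsto (fun i => digitFreq y (NS i)) Filter.atTop (nhds c) := by
    have hd := hfy.comp hNSat
    have heq : (fun i => digitFreq y (NS i)) =
        fun i => digitFreq θ (NS i) + (fun n => digitFreq y n - digitFreq θ n) (NS i) := by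
      funext i; simp
    rw [heq]
    simpa using hθNS.add hd
  have h1yNS : Filter.Tendsto (fun i => digitFreq (1-y) (NS i)) Filter.atTop (nhds (1-c)) := by
    have heq : (fun i => digitFreq (1-y) (NS i)) = fun i => 1 - digitFreq y (NS i) := by
      funext i
      exact freq_one_sub hyirr (hNSpos i)
    rw [heq]
    exact tendsto_const_nhds.sub hyNS
  have hTUapp := hTU NS hNSmono hNSpos x (1-y) ⟨hx0, hx1⟩ ⟨by linarith, by linarith⟩
    hxirr h1yirr ⟨m', t', hsq⟩
  rw [hxNS.limsup_eq, h1yNS.limsup_eq] at hTUapp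
  have hc12 : c = 1/2 := by linarith
  exact ⟨fun i => φ (ψ (i+1)), hc12 ▸ hθNS⟩
end

section
/- Let ν, ν⁽¹⁾ ∈ (0,1) both be irrational and let n ≥ 1. For each i ≥ 1 define the hybrid point ν_i = ⌊2^{i−1}ν⌋·2^{−(i−1)} + frac(2^{i−1}ν⁽¹⁾)·2^{−(i−1)} (whose binary digits agree with those of ν in positions 1,…,i−1 and with those of ν⁽¹⁾ in positions i, i+1, …); note ν_1 = ν⁽¹⁾ and each ν_i is irrational. Write h_n(μ) = f_n(√μ) for irrational μ ∈ (0,1). Then there exists an integer m ≥ 1 such that h_n(ν_i) = h_n(ν) for all i > m, and consequently the total difference reduces to a finite sum of step-by-step partial differences: h_n(ν⁽¹⁾) − h_n(ν) = Σ_{i=1}^{m} (h_n(ν_i) − h_n(ν_{i+1})). -/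
open Filter Finset Set

/-- The floor function is locally constant at irrational points. -/
lemma floor_locally_const {x : ℝ} (hx : Irrational x) :
    ∀ᶠ y in nhds x, ⌊y⌋ = ⌊x⌋ := by
  have h1 : (⌊x⌋ : ℝ) < x :=
    lt_of_le_of_ne (Int.floor_le x) (Ne.symm (hx.ne_int ⌊x⌋))
  have h2 : x < ⌊x⌋ + 1 := Int.lt_floor_add_one x
  filter_upwards [Ioo_mem_nhds h1 h2] with y hy
  exact Int.floor_eq_iff.mpr ⟨hy.1.le, hy.2⟩

/-- The square root of a positive irrational is irrational. -/
lemma irrational_sqrt_of_irrational {x : ℝ} (hx : Irrational x) (hx0 : 0 ≤ x) :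
    Irrational (Real.sqrt x) := by
  rintro ⟨q, hq⟩
  apply hx
  exact ⟨q ^ 2, by push_cast; rw [hq, Real.sq_sqrt hx0]⟩

/-- If the floors `⌊2^k α⌋` agree for `k ≤ n`, then the digit frequencies agree. -/
lemma digitFreq_congr {α β : ℝ} {n : ℕ}
    (h : ∀ k ≤ n, ⌊(2:ℝ) ^ k * α⌋ = ⌊(2:ℝ) ^ k * β⌋) :
    digitFreq α n = digitFreq β n := by
  unfold digitFreq
  congr 1
  apply Finset.sum_congr rfl
  intro i hi
  simp only [Finset.mem_Icc] at hi
  unfold binDigit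
  rw [h i hi.2, h (i - 1) (le_trans (Nat.sub_le i 1) hi.2)]

/-- Lemma 5: The change `h_n(ν⁽¹⁾) − h_n(ν)` of `h_n = f_n(√·)` is a
finite telescoping sum of step-by-step partial differences through the hybrid points
`ν_i` (digits of `ν` up to position `i−1`, digits of `ν⁽¹⁾` from position `i` on). -/
theorem total_difference_finite (ν ν₁ : ℝ)
    (hν : ν ∈ Set.Ioo (0:ℝ) 1) (hν₁ : ν₁ ∈ Set.Ioo (0:ℝ) 1)
    (hiν : Irrational ν) (hiν₁ : Irrational ν₁) (n : ℕ) (hn : 1 ≤ n) :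
    ∀ hyb : ℕ → ℝ,
      (hyb = fun i => (⌊(2:ℝ) ^ (i - 1) * ν⌋ : ℝ) / 2 ^ (i - 1)
          + Int.fract ((2:ℝ) ^ (i - 1) * ν₁) / 2 ^ (i - 1)) →
      hyb 1 = ν₁ ∧ (∀ i : ℕ, 1 ≤ i → Irrational (hyb i)) ∧
      ∃ m : ℕ, 1 ≤ m ∧
        (∀ i : ℕ, m < i →
          digitFreq (Real.sqrt (hyb i)) n = digitFreq (Real.sqrt ν) n) ∧
        digitFreq (Real.sqrt ν₁) n - digitFreq (Real.sqrt ν) n =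
          ∑ i ∈ Finset.Icc 1 m,
            (digitFreq (Real.sqrt (hyb i)) n - digitFreq (Real.sqrt (hyb (i + 1))) n) := by
  intro hyb hhyb
  -- hyb 1 = ν₁
  have hfloorν : ⌊ν⌋ = 0 := by
    rw [Int.floor_eq_zero_iff]; exact ⟨hν.1.le, hν.2⟩
  have hyb1 : hyb 1 = ν₁ := by
    simp only [hhyb]
    norm_num
    rw [hfloorν, Int.fract]
    have : ⌊ν₁⌋ = 0 := by
      rw [Int.floor_eq_zero_iff]; exact ⟨hν₁.1.le, hν₁.2⟩
    simp [this]
  -- each hyb i is ν₁ plus a rational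
  have hybeq : ∀ i : ℕ, hyb i =
      ((((⌊(2:ℝ) ^ (i - 1) * ν⌋ - ⌊(2:ℝ) ^ (i - 1) * ν₁⌋ : ℤ) : ℚ) / 2 ^ (i - 1) : ℚ) : ℝ)
        + ν₁ := by
    intro i
    simp only [hhyb, Int.fract]
    push_cast
    field_simp
    ring
  have hirr : ∀ i : ℕ, 1 ≤ i → Irrational (hyb i) := by
    intro i _
    rw [hybeq i]
    exact Irrational.ratCast_add _ hiν₁
  refine ⟨hyb1, hirr, ?_⟩
  -- hyb i → ν
  have hbound : ∀ i : ℕ, |hyb i - ν| ≤ ((1:ℝ)/2) ^ (i - 1) := by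
    intro i
    have h2 : (0:ℝ) < 2 ^ (i - 1) := by positivity
    have : hyb i - ν =
        (Int.fract ((2:ℝ) ^ (i - 1) * ν₁) - Int.fract ((2:ℝ) ^ (i - 1) * ν)) / 2 ^ (i - 1) := by
      simp only [hhyb]
      unfold Int.fract
      field_simp
      ring
    rw [this, abs_div, abs_of_pos h2, div_le_iff₀ h2, one_div, inv_pow,
      inv_mul_cancel₀ (ne_of_gt h2)]
    have ha := Int.fract_nonneg ((2:ℝ) ^ (i - 1) * ν₁)
    have hb := Int.fract_lt_one ((2:ℝ) ^ (i - 1) * ν₁)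
    have hc := Int.fract_nonneg ((2:ℝ) ^ (i - 1) * ν)
    have hd := Int.fract_lt_one ((2:ℝ) ^ (i - 1) * ν)
    rw [abs_le]; constructor <;> nlinarith
  have htend : Tendsto hyb atTop (nhds ν) := by
    rw [tendsto_iff_dist_tendsto_zero]
    apply squeeze_zero' (g := fun i : ℕ => ((1:ℝ)/2) ^ (i - 1))
      (Eventually.of_forall fun i => dist_nonneg)
      (Eventually.of_forall fun i => (by rw [Real.dist_eq]; exact hbound i))
    have h1 : Tendsto (fun i : ℕ => i - 1) atTop atTop :=
      tendsto_sub_atTop_nat 1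
    exact (tendsto_pow_atTop_nhds_zero_of_lt_one (r := (1/2:ℝ)) (by norm_num) (by norm_num)).comp h1
  -- digit frequency of sqrt is locally constant at ν
  have hsqrt : Irrational (Real.sqrt ν) := irrational_sqrt_of_irrational hiν hν.1.le
  have hloc : ∀ᶠ μ in nhds ν, digitFreq (Real.sqrt μ) n = digitFreq (Real.sqrt ν) n := by
    have H : ∀ k, ∀ᶠ μ in nhds ν,
        ⌊(2:ℝ) ^ k * Real.sqrt μ⌋ = ⌊(2:ℝ) ^ k * Real.sqrt ν⌋ := by
      intro k
      have hik : Irrational ((2:ℝ) ^ k * Real.sqrt ν) := by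
        have : Irrational (((2 ^ k : ℚ) : ℝ) * Real.sqrt ν) :=
          hsqrt.ratCast_mul (by positivity)
        simpa using this
      have hcont : Tendsto (fun μ : ℝ => (2:ℝ) ^ k * Real.sqrt μ) (nhds ν)
          (nhds ((2:ℝ) ^ k * Real.sqrt ν)) :=
        ((continuous_const.mul Real.continuous_sqrt).tendsto ν)
      exact hcont.eventually (floor_locally_const hik)
    have : ∀ᶠ μ in nhds ν, ∀ k ∈ Finset.range (n + 1),
        ⌊(2:ℝ) ^ k * Real.sqrt μ⌋ = ⌊(2:ℝ) ^ k * Real.sqrt ν⌋ :=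
      (Filter.eventually_all_finset _).mpr fun k _ => H k
    filter_upwards [this] with μ hμ
    exact digitFreq_congr fun k hk => hμ k (Finset.mem_range.mpr (Nat.lt_succ_of_le hk))
  have hev : ∀ᶠ i in atTop, digitFreq (Real.sqrt (hyb i)) n = digitFreq (Real.sqrt ν) n :=
    htend.eventually hloc
  obtain ⟨N, hN⟩ := eventually_atTop.mp hev
  refine ⟨max N 1, le_max_right _ _, fun i hi => hN i (le_of_lt (lt_of_le_of_lt (le_max_left _ _) hi)), ?_⟩
  set m := max N 1 with hm
  have hsum : ∀ g : ℕ → ℝ, ∀ M : ℕ,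
      ∑ i ∈ Finset.Icc 1 M, (g i - g (i + 1)) = g 1 - g (M + 1) := by
    intro g M
    induction M with
    | zero => simp
    | succ k ih =>
      rcases Nat.eq_zero_or_pos k with rfl | hk
      · simp
      · rw [Finset.sum_Icc_succ_top (by omega), ih]; ring
  rw [hsum (fun i => digitFreq (Real.sqrt (hyb i)) n) m, hyb1, hN (m + 1) (le_trans (le_max_left N 1) (Nat.le_succ m))]
end
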